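/- Let q be a prime power, m ≥ 2 an integer, n = q^m − 1, and set s = q^{⌈m/2⌉} − 1 − (q−2)·[m is odd]. Let Z = C_1 ∪ C_2 ∪ ⋯ ∪ C_s be the union of the q-ary cyclotomic cosets modulo n of 1, …, s. Then Z ∩ Z^{−1} ≠ ∅, where Z^{−1} = {(−z) mod n : z ∈ Z}. -/
import Mathlib


/-- The `q`-ary cyclotomic coset of `x` modulo `n`: `{x q^k mod n : k ≥ 0}`. -/
def cycCoset (q n x : ℕ) : Set ℕ := {y | ∃ k : ℕ, y = x * q ^ k % n}

lemma cycCoset_aux (q n s w k : ℕ) (h1 : 1 ≤ w) (hws : w ≤ s) (hwn : w < n)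
    (hk : s * q ^ k % n = n - w) :
    ((⋃ x ∈ Set.Icc 1 s, cycCoset q n x) ∩
      ((fun z => (n - z) % n) '' (⋃ x ∈ Set.Icc 1 s, cycCoset q n x))) ≠ ∅ := by
  rw [← Set.nonempty_iff_ne_empty]
  refine ⟨w, ?_, ?_⟩
  · exact Set.mem_biUnion ⟨h1, hws⟩ ⟨0, by simp [Nat.mod_eq_of_lt hwn]⟩
  · refine ⟨n - w, Set.mem_biUnion (⟨le_trans h1 hws, le_rfl⟩ : s ∈ Set.Icc 1 s)
      ⟨k, hk.symm⟩, ?_⟩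
    simp only
    rw [Nat.sub_sub_self hwn.le, Nat.mod_eq_of_lt hwn]

/-- For `n = q^m - 1`, `m ≥ 2`, and `s = q^⌈m/2⌉ - 1 - (q-2)·[m odd]`, the
union `Z = C_1 ∪ ⋯ ∪ C_s` of `q`-ary cyclotomic cosets satisfies
`Z ∩ Z⁻¹ ≠ ∅`, where `Z⁻¹ = {-z mod n : z ∈ Z}`. -/
theorem union_cycCosets_meets_neg
    (q m : ℕ) (hq : IsPrimePow q) (hm : 2 ≤ m) :
    (⋃ x ∈ Set.Icc 1 (q ^ ((m + 1) / 2) - 1 - (q - 2) * (if Odd m then 1 else 0)),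
        cycCoset q (q ^ m - 1) x) ∩
      ((fun z => (q ^ m - 1 - z) % (q ^ m - 1)) ''
        (⋃ x ∈ Set.Icc 1 (q ^ ((m + 1) / 2) - 1 - (q - 2) * (if Odd m then 1 else 0)),
          cycCoset q (q ^ m - 1) x)) ≠ ∅ := by
  have hq2 : 2 ≤ q := hq.two_le
  rcases Nat.even_or_odd m with ⟨t, ht⟩ | ⟨t, ht⟩
  · -- m = t + t, even case
    have ht1 : 1 ≤ t := by omega
    have hA2 : 2 ≤ q ^ t := hq2.trans (Nat.le_self_pow (by omega) q)
    have hqm : q ^ m = q ^ t * q ^ t := by rw [ht, pow_add]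
    have hs : q ^ ((m + 1) / 2) - 1 - (q - 2) * (if Odd m then 1 else 0)
        = q ^ t - 1 := by
      rw [if_neg (by rw [Nat.odd_iff]; omega), (by omega : (m + 1) / 2 = t)]
      omega
    rw [hs, hqm]
    obtain ⟨A, B, hA, hB⟩ : ∃ A B, q ^ t = A ∧ A * A = B := ⟨_, _, rfl, rfl⟩
    have h2A : 2 * A ≤ B := by
      rw [← hB]; exact Nat.mul_le_mul_right A (hA ▸ hA2)
    have hsm : (A - 1) * A = B - A := by rw [Nat.sub_one_mul, hB]
    rw [hA, hB]
    refine cycCoset_aux q (B - 1) (A - 1) (A - 1) t ?_ le_rfl ?_ ?_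
    · omega
    · omega
    · rw [hA, hsm, Nat.mod_eq_of_lt (by omega)]
      omega
  · -- m = 2t + 1, odd case
    have ht1 : 1 ≤ t := by omega
    have hA2 : 2 ≤ q ^ t := hq2.trans (Nat.le_self_pow (by omega) q)
    have hqA : q ≤ q ^ t := Nat.le_self_pow (by omega) q
    have hQA : q ^ (t + 1) = q * q ^ t := by rw [pow_succ, mul_comm]
    have hqm : q ^ m = q * q ^ t * q ^ t := by
      rw [ht, (by ring : 2 * t + 1 = (t + 1) + t), pow_add, hQA]
    have hs : q ^ ((m + 1) / 2) - 1 - (q - 2) * (if Odd m then 1 else 0)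
        = q * q ^ t - q + 1 := by
      rw [if_pos (by rw [Nat.odd_iff]; omega), (by omega : (m + 1) / 2 = t + 1), hQA]
      have : q ≤ q * q ^ t := Nat.le_mul_of_pos_right q (by omega)
      omega
    rw [hs, hqm]
    obtain ⟨A, hA⟩ : ∃ A, q ^ t = A := ⟨_, rfl⟩
    rw [hA]
    obtain ⟨QA, hQA'⟩ : ∃ QA, q * A = QA := ⟨_, rfl⟩
    obtain ⟨B, hB⟩ : ∃ B, QA * A = B := ⟨_, rfl⟩
    rw [hQA', hB]
    have hA2' : 2 ≤ A := hA ▸ hA2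
    have hqA' : q ≤ A := hA ▸ hqA
    have h2QA : 2 * A ≤ QA := hQA' ▸ Nat.mul_le_mul_right A hq2
    have h2B : 2 * QA ≤ B := by
      rw [← hB, mul_comm 2 QA]; exact Nat.mul_le_mul le_rfl hA2'
    have hkey : (QA - q + 1) * A = B - QA + A := by
      have e1 : QA - q + 1 = QA - (q - 1) := by omega
      have e2 : (q - 1) * A = QA - A := by rw [Nat.sub_one_mul, hQA']
      rw [e1, Nat.sub_mul, hB, e2]
      omega
    refine cycCoset_aux q (B - 1) (QA - q + 1) (QA - A - 1) t (by omega) (by omega)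
      (by omega) ?_
    rw [hA, hkey, Nat.mod_eq_of_lt (by omega)]
    omega
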